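/- Let X̃ be a metric space, G a group acting on X̃ by isometries, and D(x,y) = inf_{g ∈ G} dist x (g • y) the induced quotient pseudo-distance. Let α̃ : [0,∞) → X̃ be a ray (dist (α̃ s) (α̃ t) = |s − t| for all s,t). Then the function t ↦ t − D(α̃ 0, α̃ t) is nondecreasing, and sup_{0 ≤ t ≤ s} ((s − t) − D(α̃ t, α̃ s)) = lim_{t→∞} (t − D(α̃ 0, α̃ t)) (an equality in [0,∞]). Thus the excess of the projected curve equals the limit of the displacement defect along the lift. -/

import Mathlib

open Filter
open scoped ENNReal

private lemma bdd_aux {X : Type*} [MetricSpace X] {G : Type*} [Group G] [MulAction G X]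
    (x y : X) : BddBelow (Set.range fun g : G => dist x (g • y)) :=
  ⟨0, by rintro _ ⟨g, rfl⟩; exact dist_nonneg⟩

private lemma iInf_nonneg_aux {X : Type*} [MetricSpace X] {G : Type*} [Group G] [MulAction G X]
    (x y : X) : 0 ≤ ⨅ g : G, dist x (g • y) :=
  Real.iInf_nonneg fun _ => dist_nonneg

/-- Generic comparison of infima of nonnegative families. -/
private lemma iInf_le_iInf_add {G : Type*} [Nonempty G] (a b : G → ℝ) (c : ℝ)
    (ha : ∀ g, 0 ≤ a g) (h : ∀ g : G, a g ≤ b g + c) :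
    (⨅ g : G, a g) ≤ (⨅ g : G, b g) + c := by
  have hbb : BddBelow (Set.range b) := ⟨-c, by rintro _ ⟨g, rfl⟩; linarith [ha g, h g]⟩
  have hba : BddBelow (Set.range a) := ⟨0, by rintro _ ⟨g, rfl⟩; exact ha g⟩
  rw [ciInf_add hbb]
  exact le_ciInf fun g => (ciInf_le hba g).trans (h g)

/-- Let `G` act by isometries on a metric space `X̃`, and let
`D x y = inf_{g ∈ G} dist x (g • y)` be the quotient pseudo-distance. For a ray
`α̃` of `X̃`, the function `t ↦ t − D(α̃ 0, α̃ t)` is nondecreasing, and the excess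
`sup_{0 ≤ t ≤ s} ((s − t) − D(α̃ t, α̃ s))` of the projected curve equals
`lim_{t→∞} (t − D(α̃ 0, α̃ t))`, an equality in `[0,∞]`. -/
theorem excess_of_projection {X : Type*} [MetricSpace X] {G : Type*} [Group G]
    [MulAction G X] (hiso : ∀ g : G, Isometry (fun x : X => g • x))
    (α : ℝ → X)
    (hray : ∀ s t : ℝ, 0 ≤ s → 0 ≤ t → dist (α s) (α t) = |s - t|) :
    (∀ t s : ℝ, 0 ≤ t → t ≤ s →
      t - (⨅ g : G, dist (α 0) (g • α t)) ≤ s - (⨅ g : G, dist (α 0) (g • α s))) ∧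
    Tendsto (fun t : ℝ => ENNReal.ofReal (t - ⨅ g : G, dist (α 0) (g • α t)))
      atTop
      (nhds (⨆ (t : ℝ) (s : ℝ) (_ : 0 ≤ t ∧ t ≤ s),
        ENNReal.ofReal ((s - t) - ⨅ g : G, dist (α t) (g • α s)))) := by
  have mono : ∀ t s : ℝ, 0 ≤ t → t ≤ s →
      t - (⨅ g : G, dist (α 0) (g • α t)) ≤ s - (⨅ g : G, dist (α 0) (g • α s)) := by
    intro t s ht hts
    have key : (⨅ g : G, dist (α 0) (g • α s)) ≤ (⨅ g : G, dist (α 0) (g • α t)) + (s - t) := by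
      refine iInf_le_iInf_add _ _ _ (fun _ => dist_nonneg) fun g => ?_
      have h1 : dist (g • α t) (g • α s) = s - t := by
        have := (hiso g).dist_eq (α t) (α s)
        rw [this, hray t s ht (ht.trans hts), abs_of_nonpos (by linarith)]
        ring
      calc dist (α 0) (g • α s) ≤ dist (α 0) (g • α t) + dist (g • α t) (g • α s) :=
            dist_triangle _ _ _
        _ = dist (α 0) (g • α t) + (s - t) := by rw [h1]
    linarith
  refine ⟨mono, ?_⟩
  set f : ℝ → ℝ≥0∞ := fun t => ENNReal.ofReal (t - ⨅ g : G, dist (α 0) (g • α t)) with hf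
  have fzero : ∀ t : ℝ, t < 0 → f t = 0 := by
    intro t ht
    have := iInf_nonneg_aux (G := G) (α 0) (α t)
    simp only [hf, ENNReal.ofReal_eq_zero]
    linarith
  have fmono : Monotone f := by
    intro t s hts
    rcases lt_or_ge s 0 with hs | hs
    · rw [fzero t (lt_of_le_of_lt hts hs), fzero s hs]
    rcases lt_or_ge t 0 with ht | ht
    · rw [fzero t ht]; exact zero_le
    · exact ENNReal.ofReal_le_ofReal (mono t s ht hts)
  have tendsto : Tendsto f atTop (nhds (⨆ t : ℝ, f t)) := tendsto_atTop_iSup fmono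
  have sup_eq : (⨆ t : ℝ, f t) = ⨆ (t : ℝ) (s : ℝ) (_ : 0 ≤ t ∧ t ≤ s),
      ENNReal.ofReal ((s - t) - ⨅ g : G, dist (α t) (g • α s)) := by
    apply le_antisymm
    · refine iSup_le fun t => ?_
      rcases lt_or_ge t 0 with ht | ht
      · rw [fzero t ht]; exact zero_le
      · refine le_iSup_of_le 0 (le_iSup_of_le t (le_iSup_of_le ⟨le_refl 0, ht⟩ ?_))
        simp [hf]
    · refine iSup_le fun t => iSup_le fun s => iSup_le fun ⟨ht, hts⟩ => ?_
      refine le_trans ?_ (le_iSup f s)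
      apply ENNReal.ofReal_le_ofReal
      have hs : (0:ℝ) ≤ s := ht.trans hts
      have key : (⨅ g : G, dist (α 0) (g • α s)) ≤ t + (⨅ g : G, dist (α t) (g • α s)) := by
        rw [add_comm]
        refine iInf_le_iInf_add _ _ _ (fun _ => dist_nonneg) fun g => ?_
        have h0t : dist (α 0) (α t) = t := by
          rw [hray 0 t le_rfl ht, abs_of_nonpos (by linarith)]; ring
        calc dist (α 0) (g • α s) ≤ dist (α 0) (α t) + dist (α t) (g • α s) :=
              dist_triangle _ _ _
          _ = dist (α t) (g • α s) + t := by rw [h0t]; ring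
      linarith
  rw [← sup_eq]
  exact tendsto
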